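/- (Adequacy of mbC with respect to swap structures.) For every set Γ ∪ {φ} of formulas over the signature Σ = {∧, ∨, →, ¬, ∘}: Γ ⊢_{mbC} φ if and only if Γ ⊨_{Mat(K_mbC)} φ, i.e. for every swap structure B for mbC over a Boolean algebra and every valuation v over the Nmatrix M(B) with v[Γ] ⊆ D_B, it holds that v(φ) ∈ D_B. -/

import Mathlib

universe u v w u₂

/-- A multialgebra (hyperalgebra, non-deterministic algebra) over a signature `σ`,
where `σ n` is the set of `n`-ary operator symbols: each operator is interpreted as a
multioperation taking values in the nonempty subsets of the (nonempty) support. -/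
structure MultiAlg (σ : ℕ → Type v) : Type (max (u + 1) v) where
  carrier : Type u
  nonempty : Nonempty carrier
  op : ∀ {n : ℕ}, σ n → (Fin n → carrier) → Set carrier
  op_nonempty : ∀ {n : ℕ} (c : σ n) (a : Fin n → carrier), (op c a).Nonempty

namespace MultiAlg

variable {σ : ℕ → Type v}

/-- Homomorphism of multialgebras: `f[c^A(ā)] ⊆ c^B(f ∘ ā)`. -/
def IsHom (A : MultiAlg.{u} σ) (B : MultiAlg.{u₂} σ) (f : A.carrier → B.carrier) : Prop :=
  ∀ {n : ℕ} (c : σ n) (a : Fin n → A.carrier), f '' A.op c a ⊆ B.op c (f ∘ a)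

/-- Full homomorphism of multialgebras: `f[c^A(ā)] = c^B(f ∘ ā)`. -/
def IsFullHom (A : MultiAlg.{u} σ) (B : MultiAlg.{u₂} σ) (f : A.carrier → B.carrier) : Prop :=
  ∀ {n : ℕ} (c : σ n) (a : Fin n → A.carrier), f '' A.op c a = B.op c (f ∘ a)

/-- Isomorphism in the category `MAlg(σ)`: a homomorphism with a two-sided
inverse homomorphism. -/
def IsIso (A : MultiAlg.{u} σ) (B : MultiAlg.{u₂} σ) (f : A.carrier → B.carrier) : Prop :=
  IsHom A B f ∧ ∃ g : B.carrier → A.carrier,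
    IsHom B A g ∧ Function.LeftInverse g f ∧ Function.RightInverse g f

/-- Monomorphism in the category `MAlg(σ)`: a homomorphism which is
left-cancellable with respect to homomorphisms. -/
def IsMono (A : MultiAlg.{u} σ) (B : MultiAlg.{u₂} σ) (f : A.carrier → B.carrier) : Prop :=
  IsHom A B f ∧ ∀ (C : MultiAlg.{w} σ) (g h : C.carrier → A.carrier),
    IsHom C A g → IsHom C A h → f ∘ g = f ∘ h → g = h

/-- Epimorphism in the category `MAlg(σ)`: a homomorphism which is
right-cancellable with respect to homomorphisms. -/
def IsEpi (A : MultiAlg.{u} σ) (B : MultiAlg.{u₂} σ) (f : A.carrier → B.carrier) : Prop :=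
  IsHom A B f ∧ ∀ (C : MultiAlg.{w} σ) (g h : B.carrier → C.carrier),
    IsHom B C g → IsHom B C h → g ∘ f = h ∘ f → g = h

/-- The product of a family of multialgebras. -/
def pi {I : Type w} (F : I → MultiAlg.{u} σ) : MultiAlg.{max u w} σ where
  carrier := ∀ i, (F i).carrier
  nonempty := ⟨fun i => Classical.choice (F i).nonempty⟩
  op := fun {n} c a => {x | ∀ i, x i ∈ (F i).op c fun k => a k i}
  op_nonempty := fun {n} c a =>
    ⟨fun i => ((F i).op_nonempty c fun k => a k i).choose,
      fun i => ((F i).op_nonempty c fun k => a k i).choose_spec⟩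

/-- The one-element multialgebra. -/
def one (σ : ℕ → Type v) : MultiAlg.{u} σ where
  carrier := PUnit
  nonempty := ⟨PUnit.unit⟩
  op := fun _ _ => {PUnit.unit}
  op_nonempty := fun _ _ => ⟨PUnit.unit, rfl⟩

/-- The direct image of a function between (the supports of) two multialgebras,
as a submultialgebra of the codomain:
`c^{f(A)}(b̄) = ⋃ { f[c^A(ā)] : ā ∈ f⁻¹(b̄) }`. -/
def dirIm (A : MultiAlg.{u} σ) (B : MultiAlg.{u₂} σ) (f : A.carrier → B.carrier) :
    MultiAlg.{u₂} σ where
  carrier := ↥(Set.range f)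
  nonempty := ⟨⟨f (Classical.choice A.nonempty), Set.mem_range_self _⟩⟩
  op := fun {n} c b => {y | ∃ a : Fin n → A.carrier,
    (∀ i, f (a i) = (b i : B.carrier)) ∧ (y : B.carrier) ∈ f '' A.op c a}
  op_nonempty := by
    intro n c b
    choose a ha using fun i => (b i).2
    obtain ⟨x, hx⟩ := A.op_nonempty c a
    exact ⟨⟨f x, Set.mem_range_self x⟩, a, ha, x, hx, rfl⟩

/-- The corestriction `f̄ : A → f(A)` of `f` to the direct image. -/
def corestrict (A : MultiAlg.{u} σ) (B : MultiAlg.{u₂} σ) (f : A.carrier → B.carrier) :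
    A.carrier → (dirIm A B f).carrier :=
  fun x => ⟨f x, Set.mem_range_self x⟩

/-- The inclusion `g : f(A) → B` of the direct image in the codomain. -/
def dirImIncl (A : MultiAlg.{u} σ) (B : MultiAlg.{u₂} σ) (f : A.carrier → B.carrier) :
    (dirIm A B f).carrier → B.carrier :=
  fun y => y.val

/-- A multicongruence over a multialgebra. -/
structure IsMulticongruence (A : MultiAlg.{u} σ) (r : A.carrier → A.carrier → Prop) : Prop where
  equivalence : Equivalence r
  compat : ∀ {n : ℕ} (c : σ n) (a b : Fin n → A.carrier), (∀ i, r (a i) (b i)) →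
    ∀ x ∈ A.op c a, ∃ y ∈ A.op c b, r x y
  const : ∀ (c : σ 0) (a : Fin 0 → A.carrier) (x y : A.carrier),
    x ∈ A.op c a → y ∈ A.op c a → r x y

/-- The quotient multialgebra of `A` modulo a relation `r`:
`c^{A/Θ}(a₁/Θ, …, aₙ/Θ) = { a/Θ : a ∈ c^A(ā) }` (taking the union over all
representatives, which is irrelevant when `r` is a multicongruence). -/
def quotAlg (A : MultiAlg.{u} σ) (r : A.carrier → A.carrier → Prop) : MultiAlg.{u} σ where
  carrier := Quot r
  nonempty := A.nonempty.map (Quot.mk r)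
  op := fun {n} c q => {y | ∃ a : Fin n → A.carrier,
    (∀ i, Quot.mk r (a i) = q i) ∧ ∃ x ∈ A.op c a, y = Quot.mk r x}
  op_nonempty := by
    intro n c q
    choose a ha using fun i => Quot.exists_rep (q i)
    obtain ⟨x, hx⟩ := A.op_nonempty c a
    exact ⟨Quot.mk r x, a, ha, x, hx, rfl⟩

end MultiAlg



/-- The signature `Σ = {∧, ∨, →, ¬, ∘}` of the logic mbC. -/
inductive SwapSig : ℕ → Type
  | and : SwapSig 2
  | or : SwapSig 2
  | imp : SwapSig 2
  | neg : SwapSig 1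
  | circ : SwapSig 1

/-- The constraint on the first coordinate of the output of each multioperation
of a swap structure (computed in the underlying Boolean algebra). -/
def swapTgt {A : Type u} [BooleanAlgebra A] :
    ∀ {n : ℕ}, SwapSig n → (Fin n → A × A × A) → A
  | _, .and, a => (a 0).1 ⊓ (a 1).1
  | _, .or, a => (a 0).1 ⊔ (a 1).1
  | _, .imp, a => (a 0).1 ⇨ (a 1).1
  | _, .neg, a => (a 0).2.1
  | _, .circ, a => (a 0).2.2

/-- A swap structure for CPL⁺ₑ over a Boolean algebra `A`: a multialgebra over the
signature `{∧, ∨, →, ¬, ∘}` whose domain is a set of triples (snapshots) in `A³`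
containing some snapshot with first coordinate `0`, and whose (nonempty-valued)
multioperations satisfy
`∅ ≠ z # w ⊆ {u ∈ dom | u₁ = z₁ # w₁}` (for `# ∈ {∧,∨,→}`),
`∅ ≠ ¬z ⊆ {u ∈ dom | u₁ = z₂}` and `∅ ≠ ∘z ⊆ {u ∈ dom | u₁ = z₃}`. -/
structure SwapStr (A : Type u) [BooleanAlgebra A] : Type u where
  dom : Set (A × A × A)
  op : ∀ {n : ℕ}, SwapSig n → (Fin n → A × A × A) → Set (A × A × A)
  fst_zero : ∃ z ∈ dom, z.1 = ⊥
  op_nonempty : ∀ {n : ℕ} (c : SwapSig n) (a : Fin n → A × A × A),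
    (∀ i, a i ∈ dom) → (op c a).Nonempty
  op_sub : ∀ {n : ℕ} (c : SwapSig n) (a : Fin n → A × A × A), (∀ i, a i ∈ dom) →
    op c a ⊆ {u ∈ dom | u.1 = swapTgt c a}



namespace SwapStr

variable {A : Type u} [BooleanAlgebra A]

/-- The multialgebra over the signature `{∧, ∨, →, ¬, ∘}` underlying a swap structure. -/
def toMultiAlg (S : SwapStr A) : MultiAlg SwapSig where
  carrier := ↥S.dom
  nonempty := by
    obtain ⟨z, hz, -⟩ := S.fst_zero
    exact ⟨⟨z, hz⟩⟩
  op := fun {n} c a => {u : ↥S.dom | (u : A × A × A) ∈ S.op c fun i => (a i : A × A × A)}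
  op_nonempty := by
    intro n c a
    obtain ⟨x, hx⟩ := S.op_nonempty c (fun i => (a i : A × A × A)) fun i => (a i).2
    exact ⟨⟨x, (S.op_sub c _ (fun i => (a i).2) hx).1⟩, hx⟩

end SwapStr

/-- The universe of swap structures for mbC over `A`:
`B_A^{mbC} = {z ∈ A³ : z₁ ∨ z₂ = 1 and z₁ ∧ z₂ ∧ z₃ = 0}`. -/
def BmbcSet (A : Type u) [BooleanAlgebra A] : Set (A × A × A) :=
  {z | z.1 ⊔ z.2.1 = ⊤ ∧ z.1 ⊓ z.2.1 ⊓ z.2.2 = ⊥}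

/-- The universe of swap structures for mbCciw over `A`:
`B_A^{ciw} = {z ∈ B_A^{mbC} : z₃ ∨ (z₁ ∧ z₂) = 1}`. -/
def BciwSet (A : Type u) [BooleanAlgebra A] : Set (A × A × A) :=
  {z | z ∈ BmbcSet A ∧ z.2.2 ⊔ (z.1 ⊓ z.2.1) = ⊤}

/-- The full swap structure for mbC over `A`, with domain `B_A^{mbC}` and maximal
multioperations. -/
def fullMbc (A : Type u) [BooleanAlgebra A] : SwapStr A where
  dom := BmbcSet A
  op := fun {n} c a => {u ∈ BmbcSet A | u.1 = swapTgt c a}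
  fst_zero := ⟨(⊥, ⊤, ⊤), ⟨by simp, by simp⟩, rfl⟩
  op_nonempty := fun {n} c a _ =>
    ⟨(swapTgt c a, (swapTgt c a)ᶜ, ⊤), ⟨by simp, by simp⟩, rfl⟩
  op_sub := fun {n} c a _ => Set.Subset.refl _

/-- The full swap structure for CPL⁺ₑ over `A`, with domain `A³` and maximal
multioperations. -/
def fullCPLe (A : Type u) [BooleanAlgebra A] : SwapStr A where
  dom := Set.univ
  op := fun {n} c a => {u | u.1 = swapTgt c a}
  fst_zero := ⟨(⊥, ⊥, ⊥), trivial, rfl⟩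
  op_nonempty := fun {n} c a _ => ⟨(swapTgt c a, ⊥, ⊥), rfl⟩
  op_sub := fun {n} c a _ u hu => ⟨trivial, hu⟩

/-- The map `f⋆(z) = (f(z₁), f(z₂), f(z₃))` induced on full swap structures for mbC
by a Boolean algebra homomorphism `f`. -/
def mapMbc {A : Type u} {A' : Type u₂} [BooleanAlgebra A] [BooleanAlgebra A']
    (f : BoundedLatticeHom A A') (z : ↥(BmbcSet A)) : ↥(BmbcSet A') :=
  ⟨(f z.1.1, f z.1.2.1, f z.1.2.2), by
    obtain ⟨h1, h2⟩ := z.2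
    constructor
    · rw [← map_sup, h1, map_top]
    · rw [← map_inf, ← map_inf, h2, map_bot]⟩

/-- A bundled swap structure for mbC (an object of the category `SW_mbC`). -/
structure MbcSwap : Type (u + 1) where
  base : Type u
  [ba : BooleanAlgebra base]
  str : SwapStr base
  mbc : str.dom ⊆ BmbcSet base

attribute [instance] MbcSwap.ba

/-- Formulas of the logic mbC over the signature `Σ = {∧, ∨, →, ¬, ∘}`,
generated by a denumerable set of propositional variables. -/
inductive Form : Type
  | var : ℕ → Form
  | and : Form → Form → Form
  | or : Form → Form → Form
  | imp : Form → Form → Form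
  | neg : Form → Form
  | circ : Form → Form

/-- A valuation over the Nmatrix `M(S) = (S, D_S)` associated to a swap structure `S`,
where `D_S = {z ∈ dom S : z₁ = 1}`: a map `v` from formulas to the domain of `S` such
that the value of a compound formula belongs to the multioperation applied to the values
of its immediate subformulas. -/
structure IsSwapVal {A : Type u} [BooleanAlgebra A] (S : SwapStr A)
    (v : Form → A × A × A) : Prop where
  mem : ∀ φ, v φ ∈ S.dom
  vand : ∀ φ ψ, v (φ.and ψ) ∈ S.op .and ![v φ, v ψ]
  vor : ∀ φ ψ, v (φ.or ψ) ∈ S.op .or ![v φ, v ψ]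
  vimp : ∀ φ ψ, v (φ.imp ψ) ∈ S.op .imp ![v φ, v ψ]
  vneg : ∀ φ, v φ.neg ∈ S.op .neg ![v φ]
  vcirc : ∀ φ, v φ.circ ∈ S.op .circ ![v φ]

/-- Derivability in the Hilbert calculus CPL⁺ₑ (positive classical logic over the
signature `{∧, ∨, →, ¬, ∘}`, with no axioms or rules for `¬` and `∘`). -/
inductive CPLeDeriv : Set Form → Form → Prop
  | prem {Γ : Set Form} {φ : Form} : φ ∈ Γ → CPLeDeriv Γ φ
  | ax1 (Γ : Set Form) (α β : Form) : CPLeDeriv Γ (α.imp (β.imp α))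
  | ax2 (Γ : Set Form) (α β γ : Form) :
      CPLeDeriv Γ ((α.imp (β.imp γ)).imp ((α.imp β).imp (α.imp γ)))
  | ax3 (Γ : Set Form) (α β : Form) : CPLeDeriv Γ (α.imp (β.imp (α.and β)))
  | ax4 (Γ : Set Form) (α β : Form) : CPLeDeriv Γ ((α.and β).imp α)
  | ax5 (Γ : Set Form) (α β : Form) : CPLeDeriv Γ ((α.and β).imp β)
  | ax6 (Γ : Set Form) (α β : Form) : CPLeDeriv Γ (α.imp (α.or β))
  | ax7 (Γ : Set Form) (α β : Form) : CPLeDeriv Γ (β.imp (α.or β))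
  | ax8 (Γ : Set Form) (α β γ : Form) :
      CPLeDeriv Γ ((α.imp γ).imp ((β.imp γ).imp ((α.or β).imp γ)))
  | ax9 (Γ : Set Form) (α β : Form) : CPLeDeriv Γ ((α.imp β).or α)
  | mp {Γ : Set Form} {α β : Form} :
      CPLeDeriv Γ (α.imp β) → CPLeDeriv Γ α → CPLeDeriv Γ β

/-- Derivability in the Hilbert calculus mbC: CPL⁺ₑ plus
Ax10 `α ∨ ¬α` and bc1 `∘α → (α → (¬α → β))`. -/
inductive MbcDeriv : Set Form → Form → Prop
  | prem {Γ : Set Form} {φ : Form} : φ ∈ Γ → MbcDeriv Γ φ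
  | ax1 (Γ : Set Form) (α β : Form) : MbcDeriv Γ (α.imp (β.imp α))
  | ax2 (Γ : Set Form) (α β γ : Form) :
      MbcDeriv Γ ((α.imp (β.imp γ)).imp ((α.imp β).imp (α.imp γ)))
  | ax3 (Γ : Set Form) (α β : Form) : MbcDeriv Γ (α.imp (β.imp (α.and β)))
  | ax4 (Γ : Set Form) (α β : Form) : MbcDeriv Γ ((α.and β).imp α)
  | ax5 (Γ : Set Form) (α β : Form) : MbcDeriv Γ ((α.and β).imp β)
  | ax6 (Γ : Set Form) (α β : Form) : MbcDeriv Γ (α.imp (α.or β))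
  | ax7 (Γ : Set Form) (α β : Form) : MbcDeriv Γ (β.imp (α.or β))
  | ax8 (Γ : Set Form) (α β γ : Form) :
      MbcDeriv Γ ((α.imp γ).imp ((β.imp γ).imp ((α.or β).imp γ)))
  | ax9 (Γ : Set Form) (α β : Form) : MbcDeriv Γ ((α.imp β).or α)
  | ax10 (Γ : Set Form) (α : Form) : MbcDeriv Γ (α.or α.neg)
  | bc1 (Γ : Set Form) (α β : Form) : MbcDeriv Γ (α.circ.imp (α.imp (α.neg.imp β)))
  | mp {Γ : Set Form} {α β : Form} :
      MbcDeriv Γ (α.imp β) → MbcDeriv Γ α → MbcDeriv Γ β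

section BAlemmas
variable {X : Type*} [BooleanAlgebra X]

theorem bax1 (a b : X) : a ⇨ (b ⇨ a) = ⊤ := by simp [himp_eq_top_iff, le_himp_iff]

theorem bax2 (a b c : X) : (a ⇨ (b ⇨ c)) ⇨ ((a ⇨ b) ⇨ (a ⇨ c)) = ⊤ := by
  rw [himp_eq_top_iff, le_himp_iff, le_himp_iff]
  have h1 : (a ⇨ b ⇨ c) ⊓ (a ⇨ b) ⊓ a ≤ (b ⇨ c) ⊓ b :=
    le_inf ((inf_le_inf_right a inf_le_left).trans himp_inf_le)
      ((inf_le_inf_right a inf_le_right).trans himp_inf_le)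
  exact h1.trans himp_inf_le

theorem bax3 (a b : X) : a ⇨ (b ⇨ a ⊓ b) = ⊤ := by simp [himp_eq_top_iff, le_himp_iff]
theorem bax4 (a b : X) : a ⊓ b ⇨ a = ⊤ := by simp
theorem bax5 (a b : X) : a ⊓ b ⇨ b = ⊤ := by simp
theorem bax6 (a b : X) : a ⇨ a ⊔ b = ⊤ := by simp
theorem bax7 (a b : X) : b ⇨ a ⊔ b = ⊤ := by simp

theorem bax8 (a b c : X) : (a ⇨ c) ⇨ ((b ⇨ c) ⇨ (a ⊔ b ⇨ c)) = ⊤ := by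
  rw [himp_eq_top_iff, le_himp_iff, le_himp_iff, inf_sup_left]
  exact sup_le ((inf_le_inf_right a inf_le_left).trans himp_inf_le)
    ((inf_le_inf_right b inf_le_right).trans himp_inf_le)

theorem bax9 (a b : X) : (a ⇨ b) ⊔ a = ⊤ := by
  rw [himp_eq, sup_assoc, compl_sup_eq_top]; simp

theorem bbc1 (a b c d : X) (h : a ⊓ b ⊓ c = ⊥) : c ⇨ (a ⇨ (b ⇨ d)) = ⊤ := by
  rw [himp_eq_top_iff, le_himp_iff, le_himp_iff]
  have : c ⊓ a ⊓ b = ⊥ := by rw [← h]; ac_rfl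
  exact this.le.trans bot_le
end BAlemmas

instance : Top (ULift.{u} Prop) := ⟨⟨True⟩⟩
instance : Bot (ULift.{u} Prop) := ⟨⟨False⟩⟩
instance : HImp (ULift.{u} Prop) := ⟨fun a b => ⟨a.down → b.down⟩⟩
noncomputable instance : BooleanAlgebra (ULift.{u} Prop) :=
  Function.Injective.booleanAlgebra ULift.down ULift.down_injective
    Iff.rfl Iff.rfl (fun _ _ => rfl) (fun _ _ => rfl) rfl rfl (fun _ => rfl) (fun _ _ => rfl) (fun _ _ => rfl)

theorem ueq_top {a : ULift.{u} Prop} (h : a.down) : a = ⊤ := ULift.ext _ _ (eq_true h)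
theorem ueq_bot {a : ULift.{u} Prop} (h : ¬ a.down) : a = ⊥ := ULift.ext _ _ (eq_false h)
theorem uof_top {a : ULift.{u} Prop} (h : a = ⊤) : a.down := by rw [h]; exact trivial
theorem ueq_of_iff {a b : ULift.{u} Prop} (h : a.down ↔ b.down) : a = b :=
  ULift.ext _ _ (propext h)


namespace MbcDeriv

theorem mono {Γ : Set Form} {φ : Form} (h : MbcDeriv Γ φ) :
    ∀ {Γ' : Set Form}, Γ ⊆ Γ' → MbcDeriv Γ' φ := by
  induction h with
  | prem h => exact fun hs => prem (hs h)
  | ax1 => exact fun _ => ax1 _ _ _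
  | ax2 => exact fun _ => ax2 _ _ _ _
  | ax3 => exact fun _ => ax3 _ _ _
  | ax4 => exact fun _ => ax4 _ _ _
  | ax5 => exact fun _ => ax5 _ _ _
  | ax6 => exact fun _ => ax6 _ _ _
  | ax7 => exact fun _ => ax7 _ _ _
  | ax8 => exact fun _ => ax8 _ _ _ _
  | ax9 => exact fun _ => ax9 _ _ _
  | ax10 => exact fun _ => ax10 _ _
  | bc1 => exact fun _ => bc1 _ _ _
  | mp _ _ ih1 ih2 => exact fun hs => mp (ih1 hs) (ih2 hs)

theorem impSelf (Γ : Set Form) (α : Form) : MbcDeriv Γ (α.imp α) :=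
  mp (mp (ax2 Γ α (α.imp α) α) (ax1 Γ α (α.imp α))) (ax1 Γ α α)

theorem ded {Γ : Set Form} {α φ : Form} (h : MbcDeriv (insert α Γ) φ) :
    MbcDeriv Γ (α.imp φ) := by
  generalize hΔ : insert α Γ = Δ at h
  induction h with
  | @prem ψ hm =>
    rw [← hΔ] at hm
    rcases Set.mem_insert_iff.mp hm with rfl | hm
    · exact impSelf Γ ψ
    · exact mp (ax1 Γ ψ α) (prem hm)
  | ax1 => exact mp (ax1 Γ _ α) (ax1 Γ _ _)
  | ax2 => exact mp (ax1 Γ _ α) (ax2 Γ _ _ _)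
  | ax3 => exact mp (ax1 Γ _ α) (ax3 Γ _ _)
  | ax4 => exact mp (ax1 Γ _ α) (ax4 Γ _ _)
  | ax5 => exact mp (ax1 Γ _ α) (ax5 Γ _ _)
  | ax6 => exact mp (ax1 Γ _ α) (ax6 Γ _ _)
  | ax7 => exact mp (ax1 Γ _ α) (ax7 Γ _ _)
  | ax8 => exact mp (ax1 Γ _ α) (ax8 Γ _ _ _)
  | ax9 => exact mp (ax1 Γ _ α) (ax9 Γ _ _)
  | ax10 => exact mp (ax1 Γ _ α) (ax10 Γ _)
  | bc1 => exact mp (ax1 Γ _ α) (bc1 Γ _ _)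
  | mp _ _ ih1 ih2 => exact mp (mp (ax2 Γ α _ _) ih1) ih2

theorem compact {Γ : Set Form} {φ : Form} (h : MbcDeriv Γ φ) :
    ∃ s : Finset Form, ↑s ⊆ Γ ∧ MbcDeriv (↑s) φ := by
  induction h with
  | @prem ψ hm => exact ⟨{ψ}, by simpa using hm, prem (by simp)⟩
  | ax1 => exact ⟨∅, by simp, ax1 _ _ _⟩
  | ax2 => exact ⟨∅, by simp, ax2 _ _ _ _⟩
  | ax3 => exact ⟨∅, by simp, ax3 _ _ _⟩
  | ax4 => exact ⟨∅, by simp, ax4 _ _ _⟩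
  | ax5 => exact ⟨∅, by simp, ax5 _ _ _⟩
  | ax6 => exact ⟨∅, by simp, ax6 _ _ _⟩
  | ax7 => exact ⟨∅, by simp, ax7 _ _ _⟩
  | ax8 => exact ⟨∅, by simp, ax8 _ _ _ _⟩
  | ax9 => exact ⟨∅, by simp, ax9 _ _ _⟩
  | ax10 => exact ⟨∅, by simp, ax10 _ _⟩
  | bc1 => exact ⟨∅, by simp, bc1 _ _ _⟩
  | mp _ _ ih1 ih2 =>
    classical
    obtain ⟨s1, hs1, hd1⟩ := ih1
    obtain ⟨s2, hs2, hd2⟩ := ih2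
    refine ⟨s1 ∪ s2, ?_, mp (hd1.mono ?_) (hd2.mono ?_)⟩
    · rw [Finset.coe_union]; exact Set.union_subset hs1 hs2
    · rw [Finset.coe_union]; exact Set.subset_union_left
    · rw [Finset.coe_union]; exact Set.subset_union_right

theorem lindenbaum {Γ : Set Form} {φ : Form} (h : ¬ MbcDeriv Γ φ) :
    ∃ Δ, Γ ⊆ Δ ∧ ¬ MbcDeriv Δ φ ∧ ∀ ψ, ψ ∉ Δ → MbcDeriv (insert ψ Δ) φ := by
  have hzorn : ∀ c ⊆ {Δ | ¬ MbcDeriv Δ φ}, IsChain (fun x1 x2 => x1 ⊆ x2) c → c.Nonempty →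
      ∃ ub ∈ {Δ | ¬ MbcDeriv Δ φ}, ∀ s ∈ c, s ⊆ ub := by
    intro c hc hchain hne
    refine ⟨⋃₀ c, fun hd => ?_, fun s hs => Set.subset_sUnion_of_mem hs⟩
    obtain ⟨s, hsub, hds⟩ := hd.compact
    rw [Set.sUnion_eq_biUnion] at hsub
    obtain ⟨t, htc, hts⟩ :=
      hchain.directedOn.exists_mem_subset_of_finset_subset_biUnion hne hsub
    exact hc htc (hds.mono hts)
  obtain ⟨Δ, hΓΔ, hmax⟩ := zorn_subset_nonempty {Δ | ¬ MbcDeriv Δ φ} hzorn Γ h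
  refine ⟨Δ, hΓΔ, hmax.prop, fun ψ hψ => ?_⟩
  by_contra hd
  exact hψ (hmax.2 hd (Set.subset_insert ψ Δ) (Set.mem_insert ψ Δ))

end MbcDeriv

section Soundness

variable {A : Type*} [BooleanAlgebra A] {S : SwapStr A}

theorem val_mem2 {v : Form → A × A × A} (hv : IsSwapVal S v) (α β : Form) :
    ∀ i, (![v α, v β] : Fin 2 → A × A × A) i ∈ S.dom := by
  intro i; fin_cases i <;> exact hv.mem _

theorem val_mem1 {v : Form → A × A × A} (hv : IsSwapVal S v) (α : Form) :
    ∀ i, (![v α] : Fin 1 → A × A × A) i ∈ S.dom := by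
  intro i; fin_cases i; exact hv.mem _

theorem val_imp {v : Form → A × A × A} (hv : IsSwapVal S v) (α β : Form) :
    (v (α.imp β)).1 = (v α).1 ⇨ (v β).1 := by
  have h := S.op_sub .imp ![v α, v β] (val_mem2 hv α β) (hv.vimp α β)
  simpa [swapTgt] using h.2

theorem val_and {v : Form → A × A × A} (hv : IsSwapVal S v) (α β : Form) :
    (v (α.and β)).1 = (v α).1 ⊓ (v β).1 := by
  have h := S.op_sub .and ![v α, v β] (val_mem2 hv α β) (hv.vand α β)
  simpa [swapTgt] using h.2

theorem val_or {v : Form → A × A × A} (hv : IsSwapVal S v) (α β : Form) :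
    (v (α.or β)).1 = (v α).1 ⊔ (v β).1 := by
  have h := S.op_sub .or ![v α, v β] (val_mem2 hv α β) (hv.vor α β)
  simpa [swapTgt] using h.2

theorem val_neg {v : Form → A × A × A} (hv : IsSwapVal S v) (α : Form) :
    (v α.neg).1 = (v α).2.1 := by
  have h := S.op_sub .neg ![v α] (val_mem1 hv α) (hv.vneg α)
  simpa [swapTgt] using h.2

theorem val_circ {v : Form → A × A × A} (hv : IsSwapVal S v) (α : Form) :
    (v α.circ).1 = (v α).2.2 := by
  have h := S.op_sub .circ ![v α] (val_mem1 hv α) (hv.vcirc α)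
  simpa [swapTgt] using h.2

theorem mbc_soundness {Γ : Set Form} {φ : Form} (h : MbcDeriv Γ φ)
    (hS : S.dom ⊆ BmbcSet A) {v : Form → A × A × A} (hv : IsSwapVal S v)
    (hΓ : ∀ γ ∈ Γ, (v γ).1 = ⊤) : (v φ).1 = ⊤ := by
  induction h with
  | prem h => exact hΓ _ h
  | ax1 α β => simp only [val_imp hv]; exact bax1 _ _
  | ax2 α β γ => simp only [val_imp hv]; exact bax2 _ _ _
  | ax3 α β => simp only [val_imp hv, val_and hv]; exact bax3 _ _
  | ax4 α β => simp only [val_imp hv, val_and hv]; exact bax4 _ _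
  | ax5 α β => simp only [val_imp hv, val_and hv]; exact bax5 _ _
  | ax6 α β => simp only [val_imp hv, val_or hv]; exact bax6 _ _
  | ax7 α β => simp only [val_imp hv, val_or hv]; exact bax7 _ _
  | ax8 α β γ => simp only [val_imp hv, val_or hv]; exact bax8 _ _ _
  | ax9 α β => simp only [val_or hv, val_imp hv]; exact bax9 _ _
  | ax10 α => simp only [val_or hv, val_neg hv]; exact (hS (hv.mem α)).1
  | bc1 α β =>
    simp only [val_imp hv, val_circ hv, val_neg hv]
    exact bbc1 _ _ _ _ (hS (hv.mem α)).2
  | mp _ _ ih1 ih2 =>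
    rw [val_imp hv] at ih1
    exact top_unique (ih2 ▸ himp_eq_top_iff.mp ih1)

end Soundness


theorem mbc_adequacy (Γ : Set Form) (φ : Form) :
    MbcDeriv Γ φ ↔
      ∀ (A : Type u) [BooleanAlgebra A] (S : SwapStr A), S.dom ⊆ BmbcSet A →
        ∀ v : Form → A × A × A, IsSwapVal S v →
          (∀ γ ∈ Γ, (v γ).1 = ⊤) → (v φ).1 = ⊤ := by
  constructor
  · intro h A _ S hS v hv hΓ
    exact mbc_soundness h hS hv hΓ
  · intro H
    by_contra hnd
    obtain ⟨Δ, hΓΔ, hnφ, hmax⟩ := MbcDeriv.lindenbaum hnd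
    have hcl : ∀ ψ, MbcDeriv Δ ψ → ψ ∈ Δ := by
      intro ψ hψ
      by_contra hn
      exact hnφ (MbcDeriv.mp (MbcDeriv.ded (hmax ψ hn)) hψ)
    have hdisj : ∀ α β : Form, (α.or β) ∈ Δ → α ∈ Δ ∨ β ∈ Δ := by
      intro α β hor
      by_contra hn
      push_neg at hn
      exact hnφ (MbcDeriv.mp (MbcDeriv.mp (MbcDeriv.mp (MbcDeriv.ax8 Δ α β φ)
        (MbcDeriv.ded (hmax α hn.1))) (MbcDeriv.ded (hmax β hn.2))) (MbcDeriv.prem hor))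
    have hiff_imp : ∀ α β : Form, (α.imp β ∈ Δ) ↔ (α ∈ Δ → β ∈ Δ) := by
      intro α β
      constructor
      · exact fun h ha => hcl β (MbcDeriv.mp (MbcDeriv.prem h) (MbcDeriv.prem ha))
      · intro h
        rcases hdisj _ _ (hcl _ (MbcDeriv.ax9 Δ α β)) with h1 | h1
        · exact h1
        · exact hcl _ (MbcDeriv.mp (MbcDeriv.ax1 Δ β α) (MbcDeriv.prem (h h1)))
    have hiff_and : ∀ α β : Form, (α.and β ∈ Δ) ↔ (α ∈ Δ ∧ β ∈ Δ) := by
      intro α β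
      constructor
      · exact fun h => ⟨hcl α (MbcDeriv.mp (MbcDeriv.ax4 Δ α β) (MbcDeriv.prem h)),
          hcl β (MbcDeriv.mp (MbcDeriv.ax5 Δ α β) (MbcDeriv.prem h))⟩
      · exact fun ⟨h1, h2⟩ => hcl _ (MbcDeriv.mp (MbcDeriv.mp (MbcDeriv.ax3 Δ α β)
          (MbcDeriv.prem h1)) (MbcDeriv.prem h2))
    have hiff_or : ∀ α β : Form, (α.or β ∈ Δ) ↔ (α ∈ Δ ∨ β ∈ Δ) := by
      intro α β
      constructor
      · exact hdisj α β
      · rintro (h1 | h1)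
        · exact hcl _ (MbcDeriv.mp (MbcDeriv.ax6 Δ α β) (MbcDeriv.prem h1))
        · exact hcl _ (MbcDeriv.mp (MbcDeriv.ax7 Δ α β) (MbcDeriv.prem h1))
    have hnegt : ∀ α : Form, α ∈ Δ ∨ α.neg ∈ Δ :=
      fun α => hdisj _ _ (hcl _ (MbcDeriv.ax10 Δ α))
    have hcons : ∀ α : Form, ¬(α ∈ Δ ∧ α.neg ∈ Δ ∧ α.circ ∈ Δ) := by
      rintro α ⟨h1, h2, h3⟩
      exact hnφ (MbcDeriv.mp (MbcDeriv.mp (MbcDeriv.mp (MbcDeriv.bc1 Δ α φ)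
        (MbcDeriv.prem h3)) (MbcDeriv.prem h1)) (MbcDeriv.prem h2))
    set v : Form → ULift.{u} Prop × ULift.{u} Prop × ULift.{u} Prop :=
      fun ψ => (⟨ψ ∈ Δ⟩, ⟨ψ.neg ∈ Δ⟩, ⟨ψ.circ ∈ Δ⟩) with hvdef
    have hmem : ∀ ψ, v ψ ∈ BmbcSet (ULift.{u} Prop) := by
      intro ψ
      constructor
      · exact ueq_top (hnegt ψ)
      · exact ueq_bot fun h => hcons ψ ⟨h.1.1, h.1.2, h.2⟩
    have hv : IsSwapVal (fullMbc (ULift.{u} Prop)) v := by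
      constructor
      · exact hmem
      · intro α β
        refine ⟨hmem _, ?_⟩
        simp only [swapTgt, Matrix.cons_val_zero, Matrix.cons_val_one, Matrix.head_cons]
        exact ueq_of_iff (hiff_and α β)
      · intro α β
        refine ⟨hmem _, ?_⟩
        simp only [swapTgt, Matrix.cons_val_zero, Matrix.cons_val_one, Matrix.head_cons]
        exact ueq_of_iff (hiff_or α β)
      · intro α β
        refine ⟨hmem _, ?_⟩
        simp only [swapTgt, Matrix.cons_val_zero, Matrix.cons_val_one, Matrix.head_cons]
        exact ueq_of_iff (hiff_imp α β)
      · intro α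
        exact ⟨hmem _, by simp only [swapTgt, Matrix.cons_val_zero]; rfl⟩
      · intro α
        exact ⟨hmem _, by simp only [swapTgt, Matrix.cons_val_zero]; rfl⟩
    have hfin := H (ULift.{u} Prop) (fullMbc (ULift.{u} Prop)) (fun _ h => h) v hv
      (fun γ hγ => ueq_top (hΓΔ hγ))
    exact hnφ (MbcDeriv.prem (uof_top hfin))
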